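/- arXiv:2507.09035 — 4 statements merged into one kernel-verified Lean document; each statement's English description precedes it below -/
import Mathlib

section
/- Let n ≥ 1 and A > 0. There exist constants c = c(n,A) > 0 and C = C(n,A) > 0 with the following property. Suppose u : ℝⁿ → ℝ is continuously differentiable on the closed ball B̄(0,2), the function x ↦ u(x) + (A/2)‖x‖² is convex on B̄(0,2), and the number b := ‖∇u(0)‖ satisfies ‖∇u(x)‖ ≤ b for all x ∈ B̄(0,2). If ∫_{B(0,2)} u² dx ≤ c, then b^{n+4} ≤ C · ∫_{B(0,2)} u² dx. -/
open MeasureTheory Metric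

private lemma semiconvex_aux (n : ℕ) (hn : 1 ≤ n) (A : ℝ) (hA : 0 < A)
    (u : EuclideanSpace ℝ (Fin n) → ℝ)
    (hu : ContDiffOn ℝ 1 u (closedBall 0 2))
    (hconv : ConvexOn ℝ (closedBall 0 2) (fun x => u x + (A / 2) * ‖x‖ ^ 2))
    (hgrad : ∀ x ∈ closedBall (0 : EuclideanSpace ℝ (Fin n)) 2,
        ‖gradient u x‖ ≤ ‖gradient u 0‖)
    (hb : 0 < ‖gradient u 0‖) (T : ℝ) (hT0 : 0 < T) (hT1 : T ≤ 1)
    (hTb : A * T ≤ ‖gradient u 0‖ / 2) :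
    (‖gradient u 0‖ * T / 8) ^ 2 *
        ((T / 8) ^ n * (volume (ball (0 : EuclideanSpace ℝ (Fin n)) 1)).toReal)
      ≤ ∫ x in ball (0 : EuclideanSpace ℝ (Fin n)) 2, u x ^ 2 := by
  classical
  haveI : Nonempty (Fin n) := ⟨⟨0, hn⟩⟩
  set b := ‖gradient u 0‖ with hbdef
  have h02 : (0 : EuclideanSpace ℝ (Fin n)) ∈ ball (0 : EuclideanSpace ℝ (Fin n)) 2 := mem_ball_self (by norm_num)
  have hdiff : ∀ x ∈ ball (0 : EuclideanSpace ℝ (Fin n)) 2, DifferentiableAt ℝ u x := by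
    intro x hx
    have hmem : closedBall (0 : EuclideanSpace ℝ (Fin n)) 2 ∈ nhds x :=
      mem_nhds_iff.2 ⟨ball 0 2, ball_subset_closedBall, isOpen_ball, hx⟩
    exact (hu.contDiffAt hmem).differentiableAt one_ne_zero
  have hfd : ∀ x ∈ ball (0 : EuclideanSpace ℝ (Fin n)) 2,
      fderiv ℝ u x = InnerProductSpace.toDual ℝ (EuclideanSpace ℝ (Fin n)) (gradient u x) := fun x hx =>
    ((hasGradientAt_iff_hasFDerivAt).1 (hdiff x hx).hasGradientAt).fderiv
  have hfdnorm : ∀ x ∈ ball (0 : EuclideanSpace ℝ (Fin n)) 2, ‖fderiv ℝ u x‖ ≤ b := by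
    intro x hx
    rw [hfd x hx]
    rw [LinearIsometryEquiv.norm_map]; exact hgrad x (ball_subset_closedBall hx)
  have hlip : ∀ x ∈ ball (0 : EuclideanSpace ℝ (Fin n)) 2, ∀ y ∈ ball (0 : EuclideanSpace ℝ (Fin n)) 2,
      |u y - u x| ≤ b * ‖y - x‖ := by
    intro x hx y hy
    have := (convex_ball (0 : EuclideanSpace ℝ (Fin n)) 2).norm_image_sub_le_of_norm_fderiv_le hdiff hfdnorm hx hy
    simpa [Real.norm_eq_abs] using this
  -- the unit vector in the gradient direction
  set e : EuclideanSpace ℝ (Fin n) := b⁻¹ • gradient u 0 with hedef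
  have he : ‖e‖ = 1 := by
    rw [hedef, norm_smul, norm_inv, norm_norm, ← hbdef, inv_mul_cancel₀ hb.ne']
  have hinner : (inner ℝ (gradient u 0) e : ℝ) = b := by
    rw [hedef, real_inner_smul_right, real_inner_self_eq_norm_sq, ← hbdef, sq, ← mul_assoc,
      inv_mul_cancel₀ hb.ne', one_mul]
  -- the function along the line
  set φ : ℝ → ℝ := fun t => u (t • e) + A / 2 * t ^ 2 with hφdef
  have hφconv : ConvexOn ℝ (Set.Icc (0 : ℝ) 2) φ := by
    have hℓ := hconv.comp_affineMap (LinearMap.toSpanSingleton ℝ (EuclideanSpace ℝ (Fin n)) e).toAffineMap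
    have hsub : Set.Icc (0 : ℝ) 2 ⊆
        (LinearMap.toSpanSingleton ℝ (EuclideanSpace ℝ (Fin n)) e).toAffineMap ⁻¹' closedBall 0 2 := by
      intro t ht
      simp only [Set.mem_preimage, LinearMap.coe_toAffineMap, LinearMap.toSpanSingleton_apply,
        mem_closedBall, dist_zero_right, norm_smul, he, mul_one, Real.norm_eq_abs]
      rw [abs_of_nonneg ht.1]
      exact ht.2
    have := hℓ.subset hsub (convex_Icc 0 2)
    refine this.congr ?_
    intro t _
    simp only [hφdef, Function.comp_apply, LinearMap.coe_toAffineMap,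
      LinearMap.toSpanSingleton_apply, norm_smul, he, mul_one, Real.norm_eq_abs, sq_abs]
  have hφd : HasDerivAt φ b 0 := by
    have hd1 : HasDerivAt (fun t : ℝ => t • e) e 0 := by
      simpa using (hasDerivAt_id (0 : ℝ)).smul_const e
    have hdu : HasFDerivAt u (fderiv ℝ u 0) ((0 : ℝ) • e) := by
      rw [zero_smul]
      exact (hdiff 0 h02).hasFDerivAt
    have hd2 : HasDerivAt (fun t : ℝ => u (t • e)) (fderiv ℝ u 0 e) 0 :=
      hdu.comp_hasDerivAt 0 hd1
    have hval : fderiv ℝ u 0 e = b := by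
      rw [hfd 0 h02, InnerProductSpace.toDual_apply_apply, hinner]
    rw [hval] at hd2
    have hd3 : HasDerivAt (fun t : ℝ => A / 2 * t ^ 2) 0 0 := by
      simpa using (hasDerivAt_pow 2 (0 : ℝ)).const_mul (A / 2)
    have := hd2.add hd3; rw [add_zero] at this; exact this
  have hslope : b ≤ slope φ 0 T :=
    hφconv.le_slope_of_hasDerivAt ⟨le_rfl, by norm_num⟩ ⟨hT0.le, by linarith⟩ hT0 hφd
  have hkey : b * T / 2 ≤ u (T • e) - u 0 := by
    rw [slope_def_field] at hslope
    have h1 : b * T ≤ φ T - φ 0 := by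
      have := (le_div_iff₀ (by linarith : (0:ℝ) < T - 0)).1 hslope
      linarith [this]
    have hφ0 : φ 0 = u 0 := by simp [hφdef]
    have hφT : φ T = u (T • e) + A / 2 * T ^ 2 := rfl
    rw [hφ0, hφT] at h1
    nlinarith [mul_le_mul_of_nonneg_right hTb hT0.le, mul_pos hb hT0]
  -- find a point where |u| is large
  have hP : ∃ p : EuclideanSpace ℝ (Fin n), ‖p‖ ≤ 1 ∧ b * T / 4 ≤ |u p| := by
    rcases le_or_gt (b * T / 4) |u (T • e)| with h | h
    · refine ⟨T • e, ?_, h⟩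
      rw [norm_smul, he, mul_one, Real.norm_eq_abs, abs_of_pos hT0]
      exact hT1
    · refine ⟨0, by simp, ?_⟩
      have h1 : u (T • e) < b * T / 4 := lt_of_le_of_lt (le_abs_self _) h
      have h2 : -u 0 ≤ |u 0| := neg_le_abs _
      linarith
  obtain ⟨p, hpnorm, hpval⟩ := hP
  have hpmem : p ∈ ball (0 : EuclideanSpace ℝ (Fin n)) 2 := by
    rw [mem_ball, dist_zero_right]; linarith
  have hball_sub : ball p (T / 8) ⊆ ball (0 : EuclideanSpace ℝ (Fin n)) 2 := by
    intro q hq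
    rw [mem_ball] at hq ⊢
    have h1 : dist q 0 ≤ dist q p + dist p 0 := dist_triangle _ _ _
    have h2 : dist p 0 ≤ 1 := by rwa [dist_zero_right]
    linarith
  have hlb : ∀ q ∈ ball p (T / 8), (b * T / 8) ^ 2 ≤ u q ^ 2 := by
    intro q hq
    have hq2 : q ∈ ball (0 : EuclideanSpace ℝ (Fin n)) 2 := hball_sub hq
    have hd : ‖q - p‖ ≤ T / 8 := by
      rw [← dist_eq_norm]; exact (mem_ball.1 hq).le
    have h1 : |u q - u p| ≤ b * (T / 8) :=
      le_trans (hlip p hpmem q hq2) (mul_le_mul_of_nonneg_left hd hb.le)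
    have h2 : b * T / 8 ≤ |u q| := by
      have h3 := abs_sub_abs_le_abs_sub (u p) (u q)
      rw [abs_sub_comm] at h3
      linarith
    calc (b * T / 8) ^ 2 ≤ |u q| ^ 2 := pow_le_pow_left₀ (by positivity) h2 2
      _ = u q ^ 2 := sq_abs _
  have hIntC : IntegrableOn (fun x => u x ^ 2) (closedBall (0 : EuclideanSpace ℝ (Fin n)) 2) :=
    (hu.continuousOn.pow 2).integrableOn_compact (isCompact_closedBall _ _)
  have hInt : IntegrableOn (fun x => u x ^ 2) (ball (0 : EuclideanSpace ℝ (Fin n)) 2) :=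
    hIntC.mono_set ball_subset_closedBall
  have hI2 : (b * T / 8) ^ 2 * (volume (ball p (T / 8))).toReal
      ≤ ∫ x in ball p (T / 8), u x ^ 2 := by
    have := setIntegral_ge_of_const_le measurableSet_ball measure_ball_lt_top.ne hlb
      (hInt.mono_set hball_sub)
    rw [smul_eq_mul, mul_comm] at this; exact this
  have hI1 : (∫ x in ball p (T / 8), u x ^ 2) ≤ ∫ x in ball (0 : EuclideanSpace ℝ (Fin n)) 2, u x ^ 2 :=
    setIntegral_mono_set hInt (ae_of_all _ fun x => sq_nonneg (u x))
      (HasSubset.Subset.eventuallyLE hball_sub)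
  have hvol : (volume (ball p (T / 8))).toReal
      = (T / 8) ^ n * (volume (ball (0 : EuclideanSpace ℝ (Fin n)) 1)).toReal := by
    rw [Measure.addHaar_ball volume p (by positivity : (0:ℝ) ≤ T / 8),
      finrank_euclideanSpace_fin, ENNReal.toReal_mul, ENNReal.toReal_ofReal (by positivity)]
  calc (b * T / 8) ^ 2 * ((T / 8) ^ n * (volume (ball (0 : EuclideanSpace ℝ (Fin n)) 1)).toReal)
      = (b * T / 8) ^ 2 * (volume (ball p (T / 8))).toReal := by rw [hvol]
    _ ≤ ∫ x in ball p (T / 8), u x ^ 2 := hI2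
    _ ≤ ∫ x in ball (0 : EuclideanSpace ℝ (Fin n)) 2, u x ^ 2 := hI1

/-- Proposition 5.2 of the paper (Euclidean-coordinate form): for an `A`-semiconvex `C¹`
function on the closed ball of radius 2 whose gradient attains its maximum norm `b` at the
origin, smallness of the `L²` norm of `u` forces `b^{n+4} ≤ C ∫ u²`. -/
theorem semiconvex_gradient_bound_by_L2 (n : ℕ) (hn : 1 ≤ n) (A : ℝ) (hA : 0 < A) :
    ∃ c C : ℝ, 0 < c ∧ 0 < C ∧
      ∀ u : EuclideanSpace ℝ (Fin n) → ℝ,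
        ContDiffOn ℝ 1 u (closedBall 0 2) →
        ConvexOn ℝ (closedBall 0 2) (fun x => u x + (A / 2) * ‖x‖ ^ 2) →
        (∀ x ∈ closedBall (0 : EuclideanSpace ℝ (Fin n)) 2,
            ‖gradient u x‖ ≤ ‖gradient u 0‖) →
        (∫ x in ball (0 : EuclideanSpace ℝ (Fin n)) 2, u x ^ 2) ≤ c →
        ‖gradient u 0‖ ^ (n + 4) ≤
          C * ∫ x in ball (0 : EuclideanSpace ℝ (Fin n)) 2, u x ^ 2 := by
  classical
  haveI : Nonempty (Fin n) := ⟨⟨0, hn⟩⟩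
  set E := EuclideanSpace ℝ (Fin n)
  set V := (volume (ball (0 : EuclideanSpace ℝ (Fin n)) 1)).toReal with hVdef
  have hV : 0 < V :=
    ENNReal.toReal_pos (measure_ball_pos volume 0 one_pos).ne' measure_ball_lt_top.ne
  refine ⟨(A / 4) ^ 2 * ((1:ℝ) / 8) ^ n * V / 2, (16 * A) ^ (n + 2) / V,
    by positivity, by positivity, ?_⟩
  intro u hu hconv hgrad hint
  set b := ‖gradient u 0‖ with hbdef
  rcases eq_or_lt_of_le (norm_nonneg (gradient u 0)) with h0 | hb
  · rw [hbdef, ← h0, zero_pow (by omega)]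
    exact mul_nonneg (by positivity)
      (setIntegral_nonneg measurableSet_ball fun x _ => sq_nonneg _)
  · have hblt : b < 2 * A := by
      by_contra hge
      push_neg at hge
      have haux := semiconvex_aux n hn A hA u hu hconv hgrad hb 1 one_pos le_rfl
        (by linarith)
      have hmono : (A / 4) ^ 2 * (((1:ℝ) / 8) ^ n * V)
          ≤ (b * 1 / 8) ^ 2 * (((1:ℝ) / 8) ^ n * V) := by
        apply mul_le_mul_of_nonneg_right _ (by positivity)
        exact pow_le_pow_left₀ (by positivity) (by linarith) 2
      have hXpos : 0 < (A / 4) ^ 2 * (((1:ℝ) / 8) ^ n * V) := by positivity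
      nlinarith [haux, hint, hmono]
    -- main case : b < 2A
    have hT0 : 0 < b / (2 * A) := by positivity
    have hT1 : b / (2 * A) ≤ 1 := by
      rw [div_le_one (by positivity)]; linarith
    have hTb : A * (b / (2 * A)) ≤ b / 2 := by
      rw [mul_div_assoc']
      rw [show A * b / (2 * A) = b / 2 by field_simp]
    have haux := semiconvex_aux n hn A hA u hu hconv hgrad hb (b / (2 * A)) hT0 hT1 hTb
    have hrw : (b * (b / (2 * A)) / 8) ^ 2 * ((b / (2 * A) / 8) ^ n * V)
        = b ^ (n + 4) * V / (16 * A) ^ (n + 2) := by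
      have h1 : b * (b / (2 * A)) / 8 = b ^ 2 / (16 * A) := by
        rw [eq_div_iff (by positivity : (16:ℝ) * A ≠ 0)]; field_simp; ring
      have h2 : b / (2 * A) / 8 = b / (16 * A) := by
        rw [div_div]; ring_nf
      rw [h1, h2, div_pow, div_pow, ← pow_mul]
      rw [pow_add, pow_add]
      field_simp
      ring
    rw [hrw] at haux
    have hpos : (0:ℝ) < (16 * A) ^ (n + 2) := by positivity
    rw [div_mul_eq_mul_div, le_div_iff₀ hV]
    have := (div_le_iff₀ hpos).1 haux
    nlinarith [this]
end

section
/- Let n ≥ 1. There is a dimensional constant c_n > 0 with the following property. Suppose A > 0, u : ℝⁿ → ℝ is continuously differentiable on the closed ball B̄(0,2), the function x ↦ u(x) + (A/2)‖x‖² is convex on B̄(0,2), and b := ‖∇u(0)‖ satisfies 0 < b ≤ A and ‖∇u(x)‖ ≤ b for all x ∈ B̄(0,2). Then ∫_{B(0,2)} u² dx ≥ c_n · b^{n+4} / A^{n+2}. -/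
open MeasureTheory Metric InnerProductSpace

lemma aux_arith_semiconvex (n : ℕ) (V b A : ℝ) (hA : 0 < A) :
    V / (64 * 8 ^ n) * b ^ (n + 4) / A ^ (n + 2) =
      (b ^ 2 / (8 * A)) ^ 2 * ((b / (8 * A)) ^ n * V) := by
  have h8 : (8 : ℝ) ^ n ≠ 0 := by positivity
  have hAn : A ^ n ≠ 0 := by positivity
  rw [div_pow, div_pow, mul_pow, mul_pow]
  field_simp
  ring

/-- First case (`b ≤ A`) in the proof of Proposition 5.2: a dimensional constant `c_n > 0`
such that for any `A`-semiconvex `C¹` function whose gradient attains its maximal norm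
`b ∈ (0, A]` at the origin, `∫ u² ≥ c_n b^{n+4} / A^{n+2}`. -/
theorem semiconvex_L2_lower_bound_small_gradient (n : ℕ) (hn : 1 ≤ n) :
    ∃ c : ℝ, 0 < c ∧
      ∀ (A : ℝ), 0 < A →
      ∀ u : EuclideanSpace ℝ (Fin n) → ℝ,
        ContDiffOn ℝ 1 u (closedBall 0 2) →
        ConvexOn ℝ (closedBall 0 2) (fun x => u x + (A / 2) * ‖x‖ ^ 2) →
        0 < ‖gradient u 0‖ →
        ‖gradient u 0‖ ≤ A →
        (∀ x ∈ closedBall (0 : EuclideanSpace ℝ (Fin n)) 2,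
            ‖gradient u x‖ ≤ ‖gradient u 0‖) →
        (∫ x in ball (0 : EuclideanSpace ℝ (Fin n)) 2, u x ^ 2) ≥
          c * ‖gradient u 0‖ ^ (n + 4) / A ^ (n + 2) := by
  classical
  set E := EuclideanSpace ℝ (Fin n)
  haveI : Nontrivial E := by
    have : 0 < Module.finrank ℝ E := by
      rw [show Module.finrank ℝ E = n from finrank_euclideanSpace_fin]; omega
    exact Module.nontrivial_of_finrank_pos this
  set V : ℝ := (volume (ball (0 : E) 1)).toReal with hV
  have hVpos : 0 < V := by
    apply ENNReal.toReal_pos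
    · exact (measure_ball_pos volume 0 one_pos).ne'
    · exact measure_ball_lt_top.ne
  refine ⟨V / (64 * 8 ^ n), by positivity, ?_⟩
  intro A hA u hC1 hconv hb hbA hmax
  set b : ℝ := ‖gradient u 0‖ with hbdef
  set g0 : E := gradient u 0 with hg0
  set e : E := b⁻¹ • g0 with he
  have hne : ‖e‖ = 1 := by
    rw [he, norm_smul, norm_inv, norm_norm]
    field_simp
    exact div_self hb.ne'
  -- differentiability at interior points
  have hdiff : ∀ x ∈ ball (0 : E) 2, DifferentiableAt ℝ u x := by
    intro x hx
    have hnb : closedBall (0 : E) 2 ∈ nhds x :=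
      Filter.mem_of_superset (isOpen_ball.mem_nhds hx) ball_subset_closedBall
    exact ((hC1 x (ball_subset_closedBall hx)).contDiffAt hnb).differentiableAt one_ne_zero
  have hgrad : ∀ x ∈ ball (0 : E) 2, HasFDerivAt u (toDual ℝ E (gradient u x)) x :=
    fun x hx => hasGradientAt_iff_hasFDerivAt.mp (hdiff x hx).hasGradientAt
  have hfd : ∀ x ∈ ball (0 : E) 2, fderiv ℝ u x = toDual ℝ E (gradient u x) :=
    fun x hx => (hgrad x hx).fderiv
  -- Lipschitz bound
  have hLip : ∀ x ∈ ball (0 : E) 2, ∀ y ∈ ball (0 : E) 2, ‖u y - u x‖ ≤ b * ‖y - x‖ := by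
    intro x hx y hy
    refine (convex_ball 0 2).norm_image_sub_le_of_norm_fderiv_le hdiff ?_ hx hy
    intro z hz
    rw [hfd z hz, (toDual ℝ E).norm_map]
    exact hmax z (ball_subset_closedBall hz)
  have h0mem : (0 : E) ∈ ball (0 : E) 2 := by simp
  -- derivative of φ t = u (t • e) + A/2 * t^2 at 0 is b
  have hline : HasDerivAt (fun t : ℝ => t • e) e 0 := by
    simpa using (hasDerivAt_id (0 : ℝ)).smul_const e
  have hf0 : HasFDerivAt u (toDual ℝ E g0) ((fun t : ℝ => t • e) 0) := by
    simp only [zero_smul]; exact hgrad 0 h0mem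
  have hu0 : HasDerivAt (fun t : ℝ => u (t • e)) b 0 := by
    have h := hf0.comp_hasDerivAt 0 hline
    have hval : toDual ℝ E g0 e = b := by
      rw [toDual_apply_apply, he, real_inner_smul_right, real_inner_self_eq_norm_sq]
      rw [hbdef]
      field_simp
    rw [hval] at h
    exact h
  have hφ : HasDerivAt (fun t : ℝ => u (t • e) + A / 2 * t ^ 2) b 0 := by
    have h2 : HasDerivAt (fun t : ℝ => A / 2 * t ^ 2) 0 0 := by
      simpa using (hasDerivAt_pow 2 (0 : ℝ)).const_mul (A / 2)
    have h3 := hu0.add h2; rw [add_zero] at h3; exact h3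
  -- convexity of φ on Icc 0 2
  set φ : ℝ → ℝ := fun t => u (t • e) + A / 2 * t ^ 2 with hφdef
  have hφconv : ConvexOn ℝ (Set.Icc (0 : ℝ) 2) φ := by
    set m : ℝ →ᵃ[ℝ] E := ((LinearMap.id : ℝ →ₗ[ℝ] ℝ).smulRight e).toAffineMap with hm
    have hcomp := hconv.comp_affineMap m
    have hsub : Set.Icc (0 : ℝ) 2 ⊆ m ⁻¹' closedBall (0 : E) 2 := by
      intro t ht
      simp only [Set.mem_preimage, mem_closedBall, dist_zero_right, hm,
        LinearMap.coe_toAffineMap, LinearMap.coe_smulRight, LinearMap.id_coe, id_eq]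
      rw [norm_smul, hne, mul_one, Real.norm_eq_abs, abs_of_nonneg ht.1]
      exact ht.2
    have := hcomp.subset hsub (convex_Icc 0 2)
    refine this.congr ?_
    intro t _
    simp only [hφdef, Function.comp_apply, hm, LinearMap.coe_toAffineMap,
      LinearMap.coe_smulRight, LinearMap.id_coe, id_eq]
    rw [norm_smul, hne, mul_one, Real.norm_eq_abs, sq_abs]
  -- slope bound at t₀ = b / A
  set t₀ : ℝ := b / A with ht₀
  have ht₀pos : 0 < t₀ := div_pos hb hA
  have ht₀le : t₀ ≤ 1 := (div_le_one hA).mpr hbA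
  have hslope : b ≤ slope φ 0 t₀ := by
    refine hφconv.le_slope_of_hasDerivWithinAt ?_ ?_ ht₀pos hφ.hasDerivWithinAt
    · exact ⟨le_rfl, by norm_num⟩
    · exact ⟨ht₀pos.le, by linarith⟩
  have hgain : u (t₀ • e) - u 0 ≥ b ^ 2 / (2 * A) := by
    rw [slope_def_field] at hslope
    have h1 : (φ t₀ - φ 0) / (t₀ - 0) ≥ b := hslope
    rw [sub_zero] at h1
    have h2 : b * t₀ ≤ φ t₀ - φ 0 := (le_div_iff₀ ht₀pos).mp h1
    have hφt : φ t₀ = u (t₀ • e) + A / 2 * t₀ ^ 2 := rfl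
    have hφ0 : φ 0 = u 0 := by
      simp [hφdef]
    rw [hφt, hφ0] at h2
    have he1 : A / 2 * t₀ ^ 2 = b ^ 2 / (2 * A) := by
      rw [ht₀]; field_simp
    have he2 : b * t₀ = b ^ 2 / (2 * A) + b ^ 2 / (2 * A) := by
      rw [ht₀]; field_simp; ring
    linarith
  -- find a point p with |u p| large
  have hx₀mem : t₀ • e ∈ ball (0 : E) 2 := by
    rw [mem_ball, dist_zero_right, norm_smul, hne, mul_one, Real.norm_eq_abs,
      abs_of_pos ht₀pos]
    linarith
  obtain ⟨p, hpnorm, hpval⟩ : ∃ p : E, ‖p‖ ≤ 1 ∧ b ^ 2 / (4 * A) ≤ |u p| := by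
    by_cases h0 : b ^ 2 / (4 * A) ≤ |u 0|
    · exact ⟨0, by simp, h0⟩
    · refine ⟨t₀ • e, ?_, ?_⟩
      · rw [norm_smul, hne, mul_one, Real.norm_eq_abs, abs_of_pos ht₀pos]; exact ht₀le
      · push_neg at h0
        have : u 0 > -(b ^ 2 / (4 * A)) := by
          rcases abs_lt.mp h0 with ⟨ha, _⟩; linarith
        have hq : u (t₀ • e) ≥ b ^ 2 / (4 * A) := by
          have : b ^ 2 / (2 * A) = b ^ 2 / (4 * A) + b ^ 2 / (4 * A) := by
            field_simp; ring
          nlinarith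
        calc b ^ 2 / (4 * A) ≤ u (t₀ • e) := hq
          _ ≤ |u (t₀ • e)| := le_abs_self _
  set ρ : ℝ := b / (8 * A) with hρ
  have hρpos : 0 < ρ := by positivity
  have hρle : ρ ≤ 8⁻¹ := by
    rw [hρ, div_le_iff₀ (by linarith)]
    linarith
  have hpmem : p ∈ ball (0 : E) 2 := by
    rw [mem_ball, dist_zero_right]; linarith
  have hsub2 : ball p ρ ⊆ ball (0 : E) 2 := by
    intro x hx
    rw [mem_ball, dist_zero_right]
    calc ‖x‖ = ‖x - p + p‖ := by rw [sub_add_cancel]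
      _ ≤ ‖x - p‖ + ‖p‖ := norm_add_le _ _
      _ < ρ + 1 := by
          have := mem_ball_iff_norm.mp hx
          linarith
      _ ≤ 2 := by linarith [hρle]
  -- lower bound on |u| on ball p ρ
  set m₀ : ℝ := b ^ 2 / (8 * A) with hm₀
  have hm₀pos : 0 < m₀ := by positivity
  have hlow : ∀ x ∈ ball p ρ, m₀ ^ 2 ≤ u x ^ 2 := by
    intro x hx
    have hxmem : x ∈ ball (0 : E) 2 := hsub2 hx
    have hLx : |u x - u p| ≤ b * ρ := by
      have := hLip p hpmem x hxmem
      rw [Real.norm_eq_abs] at this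
      calc |u x - u p| ≤ b * ‖x - p‖ := this
        _ ≤ b * ρ := by
            have := (mem_ball_iff_norm.mp hx).le
            exact mul_le_mul_of_nonneg_left this hb.le
    have hbρ : b * ρ = b ^ 2 / (8 * A) := by rw [hρ]; field_simp
    have habs : m₀ ≤ |u x| := by
      have h1 : |u p| - |u x| ≤ |u x - u p| := by
        have h := abs_sub_abs_le_abs_sub (u p) (u x)
        rwa [abs_sub_comm] at h
      have he3 : b ^ 2 / (4 * A) = m₀ + b ^ 2 / (8 * A) := by
        rw [hm₀]; field_simp; ring
      linarith
    calc m₀ ^ 2 ≤ |u x| ^ 2 := by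
          apply pow_le_pow_left₀ hm₀pos.le habs
      _ = u x ^ 2 := sq_abs _
  -- integrability
  have hcont : ContinuousOn (fun x => u x ^ 2) (closedBall (0 : E) 2) :=
    (hC1.continuousOn).pow 2
  have hint2 : IntegrableOn (fun x => u x ^ 2) (ball (0 : E) 2) volume :=
    (hcont.integrableOn_compact (isCompact_closedBall 0 2)).mono_set ball_subset_closedBall
  have hintp : IntegrableOn (fun x => u x ^ 2) (ball p ρ) volume :=
    hint2.mono_set hsub2
  -- chain of integral inequalities
  have hmono : (∫ x in ball p ρ, u x ^ 2) ≤ ∫ x in ball (0 : E) 2, u x ^ 2 := by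
    apply setIntegral_mono_set hint2
    · filter_upwards with x using sq_nonneg _
    · exact Filter.Eventually.of_forall hsub2
  have hconst : m₀ ^ 2 * (volume (ball p ρ)).toReal ≤ ∫ x in ball p ρ, u x ^ 2 :=
    setIntegral_ge_of_const_le_real measurableSet_ball measure_ball_lt_top.ne hlow hintp
  have hvol : (volume (ball p ρ)).toReal = ρ ^ n * V := by
    have hrank : Module.finrank ℝ E = n := finrank_euclideanSpace_fin
    rw [Measure.addHaar_ball volume p hρpos.le, hrank, ENNReal.toReal_mul,
      ENNReal.toReal_ofReal (by positivity)]
  have hfinal : V / (64 * 8 ^ n) * b ^ (n + 4) / A ^ (n + 2) = m₀ ^ 2 * (ρ ^ n * V) := by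
    rw [hm₀, hρ]
    exact aux_arith_semiconvex n V b A hA
  calc V / (64 * 8 ^ n) * b ^ (n + 4) / A ^ (n + 2)
      = m₀ ^ 2 * (ρ ^ n * V) := hfinal
    _ = m₀ ^ 2 * (volume (ball p ρ)).toReal := by rw [hvol]
    _ ≤ ∫ x in ball p ρ, u x ^ 2 := hconst
    _ ≤ ∫ x in ball (0 : E) 2, u x ^ 2 := hmono
end

section
/- Let n ≥ 1. There is a dimensional constant c_n > 0 with the following property. Suppose A > 0, u : ℝⁿ → ℝ is continuously differentiable on the closed ball B̄(0,2), the function x ↦ u(x) + (A/2)‖x‖² is convex on B̄(0,2), and b := ‖∇u(0)‖ satisfies b ≥ A and ‖∇u(x)‖ ≤ b for all x ∈ B̄(0,2). Then ∫_{B(0,2)} u² dx ≥ c_n · b². -/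
open MeasureTheory Metric

/-- Second case (`b ≥ A`) in the proof of Proposition 5.2: a dimensional constant `c_n > 0`
such that for any `A`-semiconvex `C¹` function whose gradient attains its maximal norm
`b ≥ A` at the origin, `∫ u² ≥ c_n b²`. -/
theorem semiconvex_L2_lower_bound_large_gradient (n : ℕ) (hn : 1 ≤ n) :
    ∃ c : ℝ, 0 < c ∧
      ∀ (A : ℝ), 0 < A →
      ∀ u : EuclideanSpace ℝ (Fin n) → ℝ,
        ContDiffOn ℝ 1 u (closedBall 0 2) →
        ConvexOn ℝ (closedBall 0 2) (fun x => u x + (A / 2) * ‖x‖ ^ 2) →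
        A ≤ ‖gradient u 0‖ →
        (∀ x ∈ closedBall (0 : EuclideanSpace ℝ (Fin n)) 2,
            ‖gradient u x‖ ≤ ‖gradient u 0‖) →
        (∫ x in ball (0 : EuclideanSpace ℝ (Fin n)) 2, u x ^ 2) ≥
          c * ‖gradient u 0‖ ^ 2 := by
  set E := EuclideanSpace ℝ (Fin n) with hE
  set V : ℝ := (volume (ball (0 : E) (1/8))).toReal with hV
  have hVpos : 0 < V := ENNReal.toReal_pos
    (measure_ball_pos _ _ (by norm_num)).ne' measure_ball_lt_top.ne
  refine ⟨V / 64, by positivity, ?_⟩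
  intro A hA u hC1 hconv hAb hmax
  set b := ‖gradient u 0‖ with hbdef
  have hb : 0 < b := lt_of_lt_of_le hA hAb
  set e : E := b⁻¹ • gradient u 0 with hedef
  have he : ‖e‖ = 1 := by
    rw [hedef, norm_smul, norm_inv, Real.norm_eq_abs, abs_of_pos hb, ← hbdef]
    field_simp
  -- differentiability at interior points
  have hdiff : ∀ x : E, ‖x‖ < 2 →
      HasFDerivAt u (InnerProductSpace.toDual ℝ E (gradient u x)) x := by
    intro x hx
    have hnb : closedBall (0 : E) 2 ∈ nhds x :=
      closedBall_mem_nhds_of_mem (by simpa [mem_ball, dist_zero_right] using hx)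
    have hd : DifferentiableAt ℝ u x :=
      ((hC1.differentiableOn one_ne_zero).differentiableAt hnb)
    exact hd.hasGradientAt.hasFDerivAt
  -- key convexity step
  have hkey : b / 2 ≤ u e - u 0 := by
    set φ : ℝ →ᵃ[ℝ] E := AffineMap.lineMap (0 : E) e with hφdef
    have hφ : ∀ t : ℝ, φ t = t • e := by
      intro t; simp [hφdef, AffineMap.lineMap_apply]
    set G : ℝ → ℝ := fun t => u (t • e) + (A / 2) * ‖t • e‖ ^ 2 with hGdef
    have hG : ConvexOn ℝ (φ ⁻¹' closedBall 0 2) G := by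
      have := hconv.comp_affineMap φ
      have h' : G = (fun x => u x + (A / 2) * ‖x‖ ^ 2) ∘ φ := by
        funext t; simp [hGdef, Function.comp, hφ]
      rw [h']; exact this
    have h0S : (0 : ℝ) ∈ φ ⁻¹' closedBall 0 2 := by
      simp [Set.mem_preimage, hφ 0]
    have h1S : (1 : ℝ) ∈ φ ⁻¹' closedBall 0 2 := by
      simp only [Set.mem_preimage, hφ 1, one_smul, mem_closedBall_zero_iff, he]
      norm_num
    -- derivative of G at 0
    have hline : HasDerivAt (fun t : ℝ => t • e) e 0 := by
      simpa using (hasDerivAt_id (0 : ℝ)).smul_const e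
    have hF : HasFDerivAt u (InnerProductSpace.toDual ℝ E (gradient u 0))
        ((fun t : ℝ => t • e) 0) := by simpa using hdiff 0 (by norm_num)
    have Hu : HasDerivAt (fun t : ℝ => u (t • e))
        (InnerProductSpace.toDual ℝ E (gradient u 0) e) 0 :=
      hF.comp_hasDerivAt 0 hline
    have hval : InnerProductSpace.toDual ℝ E (gradient u 0) e = b := by
      rw [InnerProductSpace.toDual_apply_apply, hedef, real_inner_smul_right,
        real_inner_self_eq_norm_sq, ← hbdef]
      field_simp
    have hq0 : (fun t : ℝ => (A / 2) * ‖t • e‖ ^ 2) = fun t : ℝ => (A / 2) * t ^ 2 := by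
      funext t; rw [norm_smul, he, mul_one, Real.norm_eq_abs, sq_abs]
    have Hq : HasDerivAt (fun t : ℝ => (A / 2) * ‖t • e‖ ^ 2) 0 0 := by
      rw [hq0]
      simpa using ((hasDerivAt_pow 2 (0 : ℝ)).const_mul (A / 2))
    have HG : HasDerivAt G b 0 := by
      have := Hu.add Hq
      rw [hval, add_zero] at this; exact this
    have hslope := hG.le_slope_of_hasDerivAt h0S h1S one_pos HG
    have hsl : slope G 0 1 = u e + A / 2 - u 0 := by
      rw [slope_def_field]
      simp [hGdef, he]
    rw [hsl] at hslope
    linarith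
  -- find a point x0 with |u x0| large
  obtain ⟨x0, hx0n, hx0⟩ : ∃ x0 : E, ‖x0‖ ≤ 1 ∧ b / 4 ≤ |u x0| := by
    by_cases h : b / 4 ≤ |u 0|
    · exact ⟨0, by simp, h⟩
    · push_neg at h
      refine ⟨e, le_of_eq he, ?_⟩
      have h1 : -|u 0| ≤ u 0 := neg_abs_le _
      have h2 : u e ≤ |u e| := le_abs_self _
      linarith
  -- Lipschitz bound on closedBall 0 (3/2)
  have hlip : ∀ x ∈ closedBall (0 : E) (3/2), ∀ y ∈ closedBall (0 : E) (3/2),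
      ‖u y - u x‖ ≤ b * ‖y - x‖ := by
    intro x hx y hy
    refine (convex_closedBall _ _).norm_image_sub_le_of_norm_hasFDerivWithin_le
      (f' := fun z => InnerProductSpace.toDual ℝ E (gradient u z))
      (fun z hz => (hdiff z ?_).hasFDerivWithinAt) (fun z hz => ?_) hx hy
    · have := mem_closedBall_zero_iff.1 hz; linarith
    · rw [(InnerProductSpace.toDual ℝ E).norm_map]
      refine hmax z (closedBall_subset_closedBall (by norm_num) hz)
  -- pointwise bound on ball x0 (1/8)
  have hpt : ∀ x ∈ ball x0 (1/8), (b / 8) ^ 2 ≤ u x ^ 2 := by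
    intro x hx
    have hxx0 : ‖x - x0‖ < 1/8 := by
      have := mem_ball.1 hx; rw [dist_eq_norm] at this; linarith
    have hxn : ‖x‖ ≤ 3/2 := by
      calc ‖x‖ = ‖x - x0 + x0‖ := by rw [sub_add_cancel]
        _ ≤ ‖x - x0‖ + ‖x0‖ := norm_add_le _ _
        _ ≤ 3/2 := by linarith
    have hx32 : x ∈ closedBall (0 : E) (3/2) := mem_closedBall_zero_iff.2 hxn
    have hx0' : x0 ∈ closedBall (0 : E) (3/2) :=
      mem_closedBall_zero_iff.2 (by linarith)
    have h1 := hlip x hx32 x0 hx0'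
    have h2 : ‖x0 - x‖ ≤ 1/8 := by
      rw [norm_sub_rev]; linarith
    have h3 : |u x0 - u x| ≤ b * (1/8) := by
      calc |u x0 - u x| = ‖u x0 - u x‖ := (Real.norm_eq_abs _).symm
        _ ≤ b * ‖x0 - x‖ := h1
        _ ≤ b * (1/8) := by nlinarith
    have h4 : b / 8 ≤ |u x| := by
      have := abs_sub_abs_le_abs_sub (u x0) (u x)
      linarith
    calc (b / 8) ^ 2 ≤ |u x| ^ 2 := pow_le_pow_left₀ (by positivity) h4 2
      _ = u x ^ 2 := sq_abs _
  -- integrability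
  have hcont : ContinuousOn (fun x : E => u x ^ 2) (closedBall (0 : E) 2) :=
    (hC1.continuousOn).pow 2
  have hint2 : IntegrableOn (fun x : E => u x ^ 2) (closedBall (0 : E) 2) volume :=
    hcont.integrableOn_compact (isCompact_closedBall _ _)
  have hintB : IntegrableOn (fun x : E => u x ^ 2) (ball (0 : E) 2) volume :=
    hint2.mono_set ball_subset_closedBall
  have hsub : ball x0 (1/8) ⊆ ball (0 : E) 2 := by
    apply ball_subset_ball'
    rw [dist_zero_right]
    linarith
  have hintS : IntegrableOn (fun x : E => u x ^ 2) (ball x0 (1/8)) volume :=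
    hintB.mono_set hsub
  have hVx0 : (volume (ball x0 (1/8))).toReal = V := by
    rw [hV, Measure.addHaar_ball_center]
  rw [ge_iff_le]
  calc V / 64 * b ^ 2 = (volume (ball x0 (1/8))).toReal • ((b / 8) ^ 2) := by
        rw [hVx0, smul_eq_mul]; ring
    _ = ∫ _ in ball x0 (1/8), (b / 8) ^ 2 := (setIntegral_const _).symm
    _ ≤ ∫ x in ball x0 (1/8), u x ^ 2 := by
        refine setIntegral_mono_on (integrableOn_const measure_ball_lt_top.ne)
          hintS measurableSet_ball hpt
    _ ≤ ∫ x in ball (0 : E) 2, u x ^ 2 := by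
        refine setIntegral_mono_set hintB ?_ (HasSubset.Subset.eventuallyLE hsub)
        exact Filter.Eventually.of_forall fun x => sq_nonneg _
end

section
/- Let n ≥ 1 and let h be a real symmetric n×n matrix. Then Σ_{i,j=1}^n h_{ij}² + (1/n)·(trace h)² ≥ (1 + 1/(2n)) · Σ_{k=1}^n h_{k1}²; that is, the squared Frobenius norm of h dominates (1 + 1/(2n)) times the squared Euclidean norm of the first column of h, up to an error of (1/n)(trace h)². -/
lemma key_ineq (N A S D a t : ℝ) (hN : 1 ≤ N) (hA : A ≥ 2*S - a^2 + D)
    (hD : (N-1)*D ≥ (t-a)^2) (hS : S ≥ a^2) (hD0 : 0 ≤ D) :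
    A + (1/N)*t^2 ≥ (1 + 1/(2*N))*S := by
  have hN0 : (0:ℝ) < N := by linarith
  rw [ge_iff_le, ← sub_nonneg]
  have key : 2*N*A + 2*t^2 - (2*N+1)*S ≥ 0 := by
    nlinarith [sq_nonneg (2*t - a),
      mul_nonneg (by linarith : (0:ℝ) ≤ 2*N-1) (by linarith : 0 ≤ S - a^2),
      mul_nonneg (by linarith : (0:ℝ) ≤ N) (by linarith : 0 ≤ A - (2*S - a^2 + D))]
  have : A + (1/N)*t^2 - (1 + 1/(2*N))*S = (2*N*A + 2*t^2 - (2*N+1)*S) / (2*N) := by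
    field_simp
  rw [this]
  positivity

/-- Algebraic inequality from Step 3 of the paper (following display (6.24)): for a symmetric
`n×n` matrix `h`, the squared Frobenius norm plus `(1/n)(trace h)²` dominates `(1 + 1/(2n))`
times the squared Euclidean norm of the first column of `h`. -/
theorem frobenius_first_column_inequality (n : ℕ) (hn : 1 ≤ n)
    (h : Matrix (Fin n) (Fin n) ℝ) (hsymm : h.IsSymm) :
    (∑ i, ∑ j, h i j ^ 2) + (1 / (n : ℝ)) * h.trace ^ 2 ≥
      (1 + 1 / (2 * (n : ℝ))) * ∑ k, h k ⟨0, hn⟩ ^ 2 := by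
  set z : Fin n := ⟨0, hn⟩
  set A := ∑ i, ∑ j, h i j ^ 2 with hAdef
  set S := ∑ k, h k z ^ 2 with hSdef
  set D := ∑ i ∈ Finset.univ.erase z, h i i ^ 2 with hDdef
  have hsym : ∀ i j, h i j = h j i := fun i j => by
    have := congrFun (congrFun hsymm j) i
    simpa [Matrix.transpose_apply] using this
  have htr : h.trace = ∑ i, h i i := rfl
  -- A ≥ 2S - h z z ^ 2 + D
  have hA : A ≥ 2*S - (h z z)^2 + D := by
    have hsplit : A = (∑ j, h z j ^ 2) + ∑ i ∈ Finset.univ.erase z, ∑ j, h i j ^ 2 := by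
      rw [hAdef, ← Finset.add_sum_erase _ _ (Finset.mem_univ z)]
    have h1 : (∑ j, h z j ^ 2) = S := by
      rw [hSdef]; exact Finset.sum_congr rfl fun j _ => by rw [hsym]
    have h2 : ∀ i ∈ Finset.univ.erase z, h i z ^ 2 + h i i ^ 2 ≤ ∑ j, h i j ^ 2 := by
      intro i hi
      have hiz : i ≠ z := Finset.ne_of_mem_erase hi
      have : ({z, i} : Finset (Fin n)) ⊆ Finset.univ := Finset.subset_univ _
      calc h i z ^ 2 + h i i ^ 2 = ∑ j ∈ ({z, i} : Finset (Fin n)), h i j ^ 2 := by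
            rw [Finset.sum_pair (Ne.symm hiz)]
        _ ≤ ∑ j, h i j ^ 2 := Finset.sum_le_sum_of_subset_of_nonneg this
            (fun j _ _ => sq_nonneg _)
    have h3 : ∑ i ∈ Finset.univ.erase z, (h i z ^ 2 + h i i ^ 2) ≤
        ∑ i ∈ Finset.univ.erase z, ∑ j, h i j ^ 2 := Finset.sum_le_sum h2
    have h4 : ∑ i ∈ Finset.univ.erase z, h i z ^ 2 = S - h z z ^ 2 := by
      rw [hSdef, ← Finset.add_sum_erase _ _ (Finset.mem_univ z)]; ring
    rw [Finset.sum_add_distrib, h4] at h3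
    rw [hsplit, h1]
    linarith [h3]
  have hD : ((n:ℝ)-1)*D ≥ (h.trace - h z z)^2 := by
    have := sq_sum_le_card_mul_sum_sq (s := Finset.univ.erase z)
      (f := fun i => h i i)
    have hcard : (Finset.univ.erase z).card = n - 1 := by
      rw [Finset.card_erase_of_mem (Finset.mem_univ z), Finset.card_univ, Fintype.card_fin]
    have hsum : ∑ i ∈ Finset.univ.erase z, h i i = h.trace - h z z := by
      rw [htr, ← Finset.add_sum_erase _ _ (Finset.mem_univ z)]; ring
    rw [hcard, hsum] at this
    have hc : ((n - 1 : ℕ) : ℝ) = (n:ℝ) - 1 := by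
      have : (1:ℕ) ≤ n := hn
      push_cast [this]; ring
    calc (h.trace - h z z)^2 ≤ ((n-1:ℕ):ℝ) * D := this
      _ = ((n:ℝ)-1)*D := by rw [hc]
  have hS : S ≥ (h z z)^2 := by
    rw [hSdef]
    exact Finset.single_le_sum (f := fun k => h k z ^ 2) (fun i _ => sq_nonneg _) (Finset.mem_univ z)
  have hD0 : 0 ≤ D := Finset.sum_nonneg fun i _ => sq_nonneg _
  have hN : (1:ℝ) ≤ n := by exact_mod_cast hn
  exact key_ineq (n:ℝ) A S D (h z z) h.trace hN hA hD hS hD0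
end
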